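/- (Entanglement rate bound for Rényi entropy, α > 2, commutator form.) Let α > 2 and let d ≥ 2 be an integer satisfying d^(−2(α−1)) < α − √(α² − 1). Let n ≥ 1 and let X, Y be n×n complex matrices with 0 ≤ X ≤ Y ≤ I, Tr X = 1/d², and Tr Y = 1. Then (α/(α−1)) · d · ‖[X, Y^(α−1)]‖₁ ≤ 9 · (α/(α−1)) · (1/d) · (1 − d^(−2(α−1))). -/

import Mathlib

open scoped ComplexOrder

/-- The trace norm of a complex matrix: `Tr √(Aᴴ A)`, the sum of singular values. -/
noncomputable def traceNorm {n : ℕ} (A : Matrix (Fin n) (Fin n) ℂ) : ℝ :=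
  (((Matrix.posSemidef_conjTranspose_mul_self A).1.eigenvectorUnitary : Matrix (Fin n) (Fin n) ℂ) *
    Matrix.diagonal ((fun x : ℝ => ((√x : ℝ) : ℂ)) ∘ (Matrix.posSemidef_conjTranspose_mul_self A).1.eigenvalues) *
    (star (Matrix.posSemidef_conjTranspose_mul_self A).1.eigenvectorUnitary : Matrix (Fin n) (Fin n) ℂ)).trace.re

/-- For a Hermitian matrix `Y = Σⱼ yⱼ |φⱼ⟩⟨φⱼ|`, the matrix `f(Y) = Σⱼ f(yⱼ) |φⱼ⟩⟨φⱼ|`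
(junk value `0` if `Y` is not Hermitian). -/
noncomputable def matFun {n : ℕ} (f : ℝ → ℝ) (Y : Matrix (Fin n) (Fin n) ℂ) :
    Matrix (Fin n) (Fin n) ℂ :=
  if hY : Y.IsHermitian then
    (hY.eigenvectorUnitary : Matrix (Fin n) (Fin n) ℂ) *
      Matrix.diagonal (fun i => (f (hY.eigenvalues i) : ℂ)) *
      (star hY.eigenvectorUnitary : Matrix (Fin n) (Fin n) ℂ)
  else 0

namespace RenyiAux

open Matrix

variable {n : ℕ}

/-- Hermitian shift across a dot product. -/
lemma herm_shift {R : Matrix (Fin n) (Fin n) ℂ} (hR : R.IsHermitian) (v w : Fin n → ℂ) :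
    star v ⬝ᵥ (R *ᵥ w) = star (R *ᵥ v) ⬝ᵥ w := by
  rw [dotProduct_mulVec, star_mulVec, hR.eq]

lemma dot_eq_entry (U : Matrix.unitaryGroup (Fin n) ℂ) (A : Matrix (Fin n) (Fin n) ℂ)
    (i : Fin n) :
    star (fun k => (U : Matrix (Fin n) (Fin n) ℂ) k i) ⬝ᵥ
        (A *ᵥ fun k => (U : Matrix (Fin n) (Fin n) ℂ) k i) =
      (star (U : Matrix (Fin n) (Fin n) ℂ) * A * (U : Matrix (Fin n) (Fin n) ℂ)) i i := by
  simp only [Matrix.mul_apply, Matrix.star_apply, dotProduct, mulVec, Pi.star_apply,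
    Finset.sum_mul, Finset.mul_sum]
  rw [Finset.sum_comm]
  exact Finset.sum_congr rfl fun l _ => Finset.sum_congr rfl fun k _ => by ring

/-- Summing quadratic forms over the columns of a unitary gives the trace. -/
lemma sum_quadratic (U : Matrix.unitaryGroup (Fin n) ℂ) (A : Matrix (Fin n) (Fin n) ℂ) :
    ∑ i, star (fun k => (U : Matrix (Fin n) (Fin n) ℂ) k i) ⬝ᵥ
        (A *ᵥ fun k => (U : Matrix (Fin n) (Fin n) ℂ) k i) = A.trace := by
  have h1 : ∀ i : Fin n, star (fun k => (U : Matrix (Fin n) (Fin n) ℂ) k i) ⬝ᵥ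
      (A *ᵥ fun k => (U : Matrix (Fin n) (Fin n) ℂ) k i)
      = (star (U : Matrix (Fin n) (Fin n) ℂ) * A * (U : Matrix (Fin n) (Fin n) ℂ)) i i :=
    dot_eq_entry U A
  rw [Finset.sum_congr rfl fun i _ => h1 i]
  have : ∑ i, (star (U : Matrix (Fin n) (Fin n) ℂ) * A * (U : Matrix (Fin n) (Fin n) ℂ)) i i
      = (star (U : Matrix (Fin n) (Fin n) ℂ) * A * (U : Matrix (Fin n) (Fin n) ℂ)).trace := rfl
  rw [this, Matrix.trace_mul_cycle, Matrix.mem_unitaryGroup_iff.mp U.2, Matrix.one_mul]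

lemma trace_re_nonneg {A : Matrix (Fin n) (Fin n) ℂ} (hA : A.PosSemidef) : 0 ≤ A.trace.re := by
  have h : ∀ i, 0 ≤ (A i i).re := by
    intro i
    have h2 := hA.dotProduct_mulVec_nonneg (Pi.single i 1)
    have h3 : star (Pi.single i 1 : Fin n → ℂ) ⬝ᵥ (A *ᵥ Pi.single i 1) = A i i := by
      simp [Matrix.mulVec_single, dotProduct, Pi.single_apply, apply_ite]
    rw [h3, Complex.nonneg_iff] at h2
    exact h2.1
  rw [Matrix.trace, Complex.re_sum]
  exact Finset.sum_nonneg fun i _ => h (i)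

lemma conj_sandwich_mul (U : Matrix.unitaryGroup (Fin n) ℂ) (d e : Fin n → ℂ) :
    ((U : Matrix (Fin n) (Fin n) ℂ) * diagonal d * star (U : Matrix (Fin n) (Fin n) ℂ)) *
      ((U : Matrix (Fin n) (Fin n) ℂ) * diagonal e * star (U : Matrix (Fin n) (Fin n) ℂ)) =
    (U : Matrix (Fin n) (Fin n) ℂ) * diagonal (fun i => d i * e i) *
      star (U : Matrix (Fin n) (Fin n) ℂ) := by
  have hUU : star (U : Matrix (Fin n) (Fin n) ℂ) * (U : Matrix (Fin n) (Fin n) ℂ) = 1 :=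
    Matrix.mem_unitaryGroup_iff'.mp U.2
  calc ((U : Matrix (Fin n) (Fin n) ℂ) * diagonal d * star (U : Matrix (Fin n) (Fin n) ℂ)) *
      ((U : Matrix (Fin n) (Fin n) ℂ) * diagonal e * star (U : Matrix (Fin n) (Fin n) ℂ))
      = (U : Matrix (Fin n) (Fin n) ℂ) * (diagonal d *
          ((star (U : Matrix (Fin n) (Fin n) ℂ) * (U : Matrix (Fin n) (Fin n) ℂ)) * diagonal e)) *
          star (U : Matrix (Fin n) (Fin n) ℂ) := by
        simp only [Matrix.mul_assoc]
    _ = (U : Matrix (Fin n) (Fin n) ℂ) * diagonal (fun i => d i * e i) *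
          star (U : Matrix (Fin n) (Fin n) ℂ) := by
        rw [hUU, Matrix.one_mul, Matrix.diagonal_mul_diagonal]

lemma abs_dot_le (p q : Fin n → ℂ) :
    ‖star p ⬝ᵥ q‖ ≤
      Real.sqrt (∑ k, ‖p k‖ ^ 2) * Real.sqrt (∑ k, ‖q k‖ ^ 2) := by
  calc ‖star p ⬝ᵥ q‖ ≤ ∑ k, ‖star (p k) * q k‖ := by
        exact norm_sum_le _ _
    _ = ∑ k, ‖p k‖ * ‖q k‖ := by
        simp [_root_.map_mul]
    _ ≤ _ := Real.sum_mul_le_sqrt_mul_sqrt _ _ _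

lemma re_dot_self (p : Fin n → ℂ) : (star p ⬝ᵥ p).re = ∑ k, ‖p k‖ ^ 2 := by
  rw [dotProduct, Complex.re_sum]
  refine Finset.sum_congr rfl fun k _ => ?_
  rw [Pi.star_apply, Complex.star_def, mul_comm, Complex.mul_conj]
  simp [Complex.normSq_eq_norm_sq, ← Complex.ofReal_pow]

lemma basis_dot_one {B : Matrix (Fin n) (Fin n) ℂ} (hB : B.IsHermitian) (i : Fin n) :
    star (⇑(hB.eigenvectorBasis i)) ⬝ᵥ ⇑(hB.eigenvectorBasis i) = 1 := by
  have h := hB.eigenvectorBasis.orthonormal.1 i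
  have h2 : (inner ℂ (hB.eigenvectorBasis i) (hB.eigenvectorBasis i) : ℂ) = 1 := by
    rw [inner_self_eq_norm_sq_to_K, h]
    norm_num
  rw [EuclideanSpace.inner_eq_star_dotProduct] at h2
  rw [dotProduct_comm]
  simpa using h2

lemma sum_quadratic' {B : Matrix (Fin n) (Fin n) ℂ} (hB : B.IsHermitian)
    (A : Matrix (Fin n) (Fin n) ℂ) :
    ∑ i, star (⇑(hB.eigenvectorBasis i)) ⬝ᵥ (A *ᵥ ⇑(hB.eigenvectorBasis i)) = A.trace := by
  have hcol : ∀ i : Fin n, ⇑(hB.eigenvectorBasis i) =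
      (fun k => (hB.eigenvectorUnitary : Matrix (Fin n) (Fin n) ℂ) k i) := by
    intro i
    funext k
    rfl
  simp_rw [hcol]
  exact sum_quadratic _ A

open scoped MatrixOrder in
noncomputable def msqrt (X : Matrix (Fin n) (Fin n) ℂ) : Matrix (Fin n) (Fin n) ℂ := CFC.sqrt X

open scoped MatrixOrder in
lemma msqrt_psd {X : Matrix (Fin n) (Fin n) ℂ} : (msqrt X).PosSemidef :=
  (CFC.sqrt_nonneg X).posSemidef

open scoped MatrixOrder in
lemma msqrt_mul_self {X : Matrix (Fin n) (Fin n) ℂ} (hX : X.PosSemidef) : msqrt X * msqrt X = X :=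
  CFC.sqrt_mul_sqrt_self X hX.nonneg

open scoped MatrixOrder in
lemma traceNorm_eq_cfc (M : Matrix (Fin n) (Fin n) ℂ) :
    traceNorm M = (cfc Real.sqrt (Mᴴ * M)).trace.re := by
  rw [traceNorm, (posSemidef_conjTranspose_mul_self M).1.cfc_eq, IsHermitian.cfc,
    Unitary.conjStarAlgAut_apply]
  rfl

open scoped MatrixOrder in
lemma eq_cfc_sqrt_of_sq {M S : Matrix (Fin n) (Fin n) ℂ} (hS : S.PosSemidef)
    (h : S ^ 2 = Mᴴ * M) : S = cfc Real.sqrt (Mᴴ * M) := by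
  rw [← cfcₙ_eq_cfc (hf0 := Real.sqrt_zero),
    ← CFC.sqrt_eq_real_sqrt _ (posSemidef_conjTranspose_mul_self M).nonneg, ← h,
    CFC.sqrt_sq S hS.nonneg]

end RenyiAux

set_option maxHeartbeats 1000000 in
open scoped Matrix in
theorem renyi_entanglement_rate_bound {n : ℕ} (hn : 1 ≤ n) (α : ℝ) (hα : 2 < α)
    (d : ℕ) (hd : 2 ≤ d)
    (hdα : (d : ℝ) ^ (-(2 * (α - 1))) < α - Real.sqrt (α ^ 2 - 1))
    (X Y : Matrix (Fin n) (Fin n) ℂ)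
    (hX : X.PosSemidef) (hXY : (Y - X).PosSemidef)
    (hYI : ((1 : Matrix (Fin n) (Fin n) ℂ) - Y).PosSemidef)
    (hTrX : X.trace = 1 / (d : ℂ) ^ 2) (hTrY : Y.trace = 1) :
    (α / (α - 1)) * d *
        traceNorm (X * matFun (fun t => t ^ (α - 1)) Y -
          matFun (fun t => t ^ (α - 1)) Y * X) ≤
      9 * (α / (α - 1)) * (1 / d) * (1 - (d : ℝ) ^ (-(2 * (α - 1)))) := by
  classical
  set F : Matrix (Fin n) (Fin n) ℂ := matFun (fun t => t ^ (α - 1)) Y with hFdef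
  set M : Matrix (Fin n) (Fin n) ℂ := X * F - F * X with hMdef
  -- Y is PSD
  have hYps : Y.PosSemidef := by
    have h := hXY.add hX
    rwa [sub_add_cancel] at h
  have hYh : Y.IsHermitian := hYps.1
  set g : Fin n → ℝ := fun i => (hYh.eigenvalues i) ^ (α - 1) with hg
  have hFeq : F = (hYh.eigenvectorUnitary : Matrix (Fin n) (Fin n) ℂ) *
      Matrix.diagonal (fun i => (g i : ℂ)) *
      star (hYh.eigenvectorUnitary : Matrix (Fin n) (Fin n) ℂ) := by
    rw [hFdef, matFun, dif_pos hYh]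
  -- eigenvalues of Y lie in [0,1]
  have hev0 : ∀ i, 0 ≤ hYh.eigenvalues i := fun i => hYps.eigenvalues_nonneg i
  have hev1 : ∀ i, hYh.eigenvalues i ≤ 1 := by
    intro i
    have hmv := hYh.mulVec_eigenvectorBasis i
    have hu1 := RenyiAux.basis_dot_one hYh i
    have h2 := hYI.dotProduct_mulVec_nonneg (⇑(hYh.eigenvectorBasis i))
    rw [Matrix.sub_mulVec, Matrix.one_mulVec, hmv, dotProduct_sub,
      dotProduct_smul, hu1] at h2
    rw [Complex.nonneg_iff] at h2
    have h3 := h2.1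
    simp only [Complex.sub_re, Complex.one_re, Complex.real_smul, mul_one,
      Complex.ofReal_re] at h3
    linarith
  have hg0 : ∀ i, 0 ≤ g i := fun i => Real.rpow_nonneg (hev0 i) _
  have hg1 : ∀ i, g i ≤ 1 := fun i => Real.rpow_le_one (hev0 i) (hev1 i) (by linarith)
  -- F is Hermitian
  have hDh : Matrix.IsHermitian (Matrix.diagonal (fun i => (g i : ℂ))) :=
    Matrix.isHermitian_diagonal_of_self_adjoint _
      (funext fun i => Complex.conj_ofReal (g i))
  have hFh : F.IsHermitian := by
    rw [hFeq]
    exact Matrix.isHermitian_mul_mul_conjTranspose _ hDh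
  -- 1 - F * F is PSD
  have hWW : (hYh.eigenvectorUnitary : Matrix (Fin n) (Fin n) ℂ) *
      star (hYh.eigenvectorUnitary : Matrix (Fin n) (Fin n) ℂ) = 1 :=
    Matrix.mem_unitaryGroup_iff.mp hYh.eigenvectorUnitary.2
  have h1F : (hYh.eigenvectorUnitary : Matrix (Fin n) (Fin n) ℂ) *
      Matrix.diagonal (fun i => ((1 - g i ^ 2 : ℝ) : ℂ)) *
      star (hYh.eigenvectorUnitary : Matrix (Fin n) (Fin n) ℂ) = 1 - F * F := by
    have hdsub : Matrix.diagonal (fun i => ((1 - g i ^ 2 : ℝ) : ℂ)) =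
        (1 : Matrix (Fin n) (Fin n) ℂ) - Matrix.diagonal (fun i => (g i : ℂ) * (g i : ℂ)) := by
      ext i j
      by_cases h : i = j
      · subst h
        simp only [Matrix.diagonal_apply_eq, Matrix.sub_apply, Matrix.one_apply_eq]
        push_cast
        ring
      · simp [Matrix.diagonal_apply_ne _ h, Matrix.one_apply_ne h]
    rw [hdsub, Matrix.mul_sub, Matrix.mul_one, Matrix.sub_mul, hWW, hFeq,
      RenyiAux.conj_sandwich_mul]
  have hFF : ((1 : Matrix (Fin n) (Fin n) ℂ) - F * F).PosSemidef := by
    rw [← h1F]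
    have hdiag : (Matrix.diagonal (fun i => ((1 - g i ^ 2 : ℝ) : ℂ))).PosSemidef :=
      Matrix.posSemidef_diagonal_iff.mpr fun i =>
        Complex.zero_le_real.mpr (by nlinarith [hg0 i, hg1 i])
    exact hdiag.mul_mul_conjTranspose_same _
  -- M is anti-Hermitian; i • M is Hermitian
  have hMct : Mᴴ = -M := by
    rw [hMdef, Matrix.conjTranspose_sub, Matrix.conjTranspose_mul, Matrix.conjTranspose_mul,
      hX.1.eq, hFh.eq, neg_sub]
  have hHh : (Complex.I • M).IsHermitian := by
    rw [Matrix.IsHermitian, Matrix.conjTranspose_smul, hMct, Complex.star_def, Complex.conj_I,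
      neg_smul, smul_neg, neg_neg]
  have hMM : Mᴴ * M = (Complex.I • M) * (Complex.I • M) := by
    rw [hMct, Matrix.smul_mul, Matrix.mul_smul, smul_smul, Complex.I_mul_I, Matrix.neg_mul,
      neg_one_smul]
  -- spectral decomposition of i • M
  have hspec : Complex.I • M = (hHh.eigenvectorUnitary : Matrix (Fin n) (Fin n) ℂ) *
      Matrix.diagonal (fun i => ((hHh.eigenvalues i : ℝ) : ℂ)) *
      star (hHh.eigenvectorUnitary : Matrix (Fin n) (Fin n) ℂ) := hHh.spectral_theorem
  have hVV : star (hHh.eigenvectorUnitary : Matrix (Fin n) (Fin n) ℂ) *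
      (hHh.eigenvectorUnitary : Matrix (Fin n) (Fin n) ℂ) = 1 :=
    Matrix.mem_unitaryGroup_iff'.mp hHh.eigenvectorUnitary.2
  have hSps : ((hHh.eigenvectorUnitary : Matrix (Fin n) (Fin n) ℂ) *
      Matrix.diagonal (fun i => ((|hHh.eigenvalues i| : ℝ) : ℂ)) *
      star (hHh.eigenvectorUnitary : Matrix (Fin n) (Fin n) ℂ)).PosSemidef := by
    have hdiag : (Matrix.diagonal (fun i => ((|hHh.eigenvalues i| : ℝ) : ℂ))).PosSemidef :=
      Matrix.posSemidef_diagonal_iff.mpr fun i =>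
        Complex.zero_le_real.mpr (abs_nonneg _)
    exact hdiag.mul_mul_conjTranspose_same _
  have hSsq : ((hHh.eigenvectorUnitary : Matrix (Fin n) (Fin n) ℂ) *
      Matrix.diagonal (fun i => ((|hHh.eigenvalues i| : ℝ) : ℂ)) *
      star (hHh.eigenvectorUnitary : Matrix (Fin n) (Fin n) ℂ)) ^ 2 = Mᴴ * M := by
    have hHH : (Complex.I • M) * (Complex.I • M) =
        (hHh.eigenvectorUnitary : Matrix (Fin n) (Fin n) ℂ) *
        Matrix.diagonal (fun i => ((hHh.eigenvalues i : ℝ) : ℂ) * ((hHh.eigenvalues i : ℝ) : ℂ)) *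
        star (hHh.eigenvectorUnitary : Matrix (Fin n) (Fin n) ℂ) := by
      conv_lhs => rw [hspec]
      rw [RenyiAux.conj_sandwich_mul]
    have habs2 : (fun i => ((|hHh.eigenvalues i| : ℝ) : ℂ) * ((|hHh.eigenvalues i| : ℝ) : ℂ)) =
        (fun i => ((hHh.eigenvalues i : ℝ) : ℂ) * ((hHh.eigenvalues i : ℝ) : ℂ)) := by
      funext i
      rw [← Complex.ofReal_mul, ← Complex.ofReal_mul, abs_mul_abs_self]
    rw [pow_two, hMM, hHH, RenyiAux.conj_sandwich_mul, habs2]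
  have hTN : traceNorm M = ∑ i, |hHh.eigenvalues i| := by
    have hsqrt := RenyiAux.eq_cfc_sqrt_of_sq hSps hSsq
    rw [RenyiAux.traceNorm_eq_cfc, ← hsqrt, Matrix.trace_mul_cycle, hVV, Matrix.one_mul,
      Matrix.trace_diagonal, ← Complex.ofReal_sum, Complex.ofReal_re]
  -- per-eigenvalue bound
  set R : Matrix (Fin n) (Fin n) ℂ := RenyiAux.msqrt X with hRdef
  have hRps : R.PosSemidef := RenyiAux.msqrt_psd
  have hRh : R.IsHermitian := hRps.1
  have hRR : R * R = X := RenyiAux.msqrt_mul_self hX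
  have hmain : ∀ i : Fin n, |hHh.eigenvalues i| ≤
      (star (⇑(hHh.eigenvectorBasis i)) ⬝ᵥ (X *ᵥ ⇑(hHh.eigenvectorBasis i))).re +
      (star (⇑(hHh.eigenvectorBasis i)) ⬝ᵥ ((F * X * F) *ᵥ ⇑(hHh.eigenvectorBasis i))).re := by
    intro i
    set u : Fin n → ℂ := ⇑(hHh.eigenvectorBasis i) with hu
    have hu1 : star u ⬝ᵥ u = 1 := RenyiAux.basis_dot_one hHh i
    set z : ℂ := star u ⬝ᵥ (X *ᵥ (F *ᵥ u)) with hz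
    have hlam : ((hHh.eigenvalues i : ℝ) : ℂ) = Complex.I * (z - star z) := by
      have h1 : ((hHh.eigenvalues i : ℝ) : ℂ) = star u ⬝ᵥ ((Complex.I • M) *ᵥ u) := by
        rw [hHh.mulVec_eigenvectorBasis i, ← hu]
        rw [show (hHh.eigenvalues i) • u = ((hHh.eigenvalues i : ℝ) : ℂ) • u from
          funext fun k => by simp [Complex.real_smul]]
        rw [dotProduct_smul, hu1, smul_eq_mul, mul_one]
      have h2 : star u ⬝ᵥ ((F * X) *ᵥ u) = star z := by
        rw [← Matrix.mulVec_mulVec, RenyiAux.herm_shift hFh]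
        have h3 : z = star (X *ᵥ u) ⬝ᵥ (F *ᵥ u) := by
          rw [hz, RenyiAux.herm_shift hX.1]
        rw [h3, Matrix.star_dotProduct]
      rw [h1, Matrix.smul_mulVec, dotProduct_smul, smul_eq_mul, hMdef,
        Matrix.sub_mulVec, dotProduct_sub, ← Matrix.mulVec_mulVec, ← hz, h2]
    have hlamre : (hHh.eigenvalues i) = -(2 * z.im) := by
      have h := congrArg Complex.re hlam
      simp only [Complex.star_def, Complex.ofReal_re, Complex.mul_re, Complex.sub_re,
        Complex.sub_im, Complex.conj_re, Complex.conj_im, Complex.I_re, Complex.I_im] at h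
      linarith
    have habs : |hHh.eigenvalues i| ≤ 2 * ‖z‖ := by
      rw [hlamre, abs_neg, abs_mul, abs_two]
      have h := Complex.abs_im_le_norm z
      nlinarith [abs_nonneg z.im, _root_.abs_abs z.im, norm_nonneg z]
    set p : Fin n → ℂ := R *ᵥ u with hp
    set q : Fin n → ℂ := R *ᵥ (F *ᵥ u) with hq
    have hzpq : z = star p ⬝ᵥ q := by
      rw [hz, ← hRR, ← Matrix.mulVec_mulVec, RenyiAux.herm_shift hRh, hp, hq,
        Matrix.mulVec_mulVec]
    have hpp : (star u ⬝ᵥ (X *ᵥ u)).re = ∑ k, ‖p k‖ ^ 2 := by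
      rw [← RenyiAux.re_dot_self, hp, ← RenyiAux.herm_shift hRh, Matrix.mulVec_mulVec, hRR]
    have hqq : (star u ⬝ᵥ ((F * X * F) *ᵥ u)).re = ∑ k, ‖q k‖ ^ 2 := by
      rw [← RenyiAux.re_dot_self, hq, ← RenyiAux.herm_shift hRh, Matrix.mulVec_mulVec, hRR,
        ← RenyiAux.herm_shift hFh, Matrix.mulVec_mulVec, Matrix.mulVec_mulVec,
        Matrix.mul_assoc]
    have hcs : ‖z‖ ≤ Real.sqrt (∑ k, ‖p k‖ ^ 2) *
        Real.sqrt (∑ k, ‖q k‖ ^ 2) := by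
      rw [hzpq]
      exact RenyiAux.abs_dot_le p q
    have hA2 : 0 ≤ ∑ k, ‖p k‖ ^ 2 := Finset.sum_nonneg fun k _ => sq_nonneg _
    have hB2 : 0 ≤ ∑ k, ‖q k‖ ^ 2 := Finset.sum_nonneg fun k _ => sq_nonneg _
    have hamgm : 2 * (Real.sqrt (∑ k, ‖p k‖ ^ 2) *
        Real.sqrt (∑ k, ‖q k‖ ^ 2)) ≤
        (∑ k, ‖p k‖ ^ 2) + (∑ k, ‖q k‖ ^ 2) := by
      nlinarith [Real.sq_sqrt hA2, Real.sq_sqrt hB2,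
        Real.sqrt_nonneg (∑ k, ‖p k‖ ^ 2),
        Real.sqrt_nonneg (∑ k, ‖q k‖ ^ 2),
        sq_nonneg (Real.sqrt (∑ k, ‖p k‖ ^ 2) -
          Real.sqrt (∑ k, ‖q k‖ ^ 2))]
    rw [hpp, hqq]
    calc |hHh.eigenvalues i| ≤ 2 * ‖z‖ := habs
      _ ≤ 2 * (Real.sqrt (∑ k, ‖p k‖ ^ 2) *
          Real.sqrt (∑ k, ‖q k‖ ^ 2)) := by linarith
      _ ≤ _ := hamgm
  -- sum the bounds
  have hsumX : ∑ i, (star (⇑(hHh.eigenvectorBasis i)) ⬝ᵥ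
      (X *ᵥ ⇑(hHh.eigenvectorBasis i))).re = X.trace.re := by
    rw [← Complex.re_sum, RenyiAux.sum_quadratic' hHh X]
  have hsumB : ∑ i, (star (⇑(hHh.eigenvectorBasis i)) ⬝ᵥ
      ((F * X * F) *ᵥ ⇑(hHh.eigenvectorBasis i))).re = (F * X * F).trace.re := by
    rw [← Complex.re_sum, RenyiAux.sum_quadratic' hHh (F * X * F)]
  -- Tr(FXF) ≤ Tr(X)
  have hFXF : (F * X * F).trace.re ≤ X.trace.re := by
    have h0 := RenyiAux.trace_re_nonneg (hFF.mul_mul_conjTranspose_same R)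
    have heq : R * ((1 : Matrix (Fin n) (Fin n) ℂ) - F * F) * Rᴴ = X - R * (F * F) * R := by
      rw [hRh.eq, Matrix.mul_sub, Matrix.mul_one, Matrix.sub_mul, hRR]
    have htr : (R * (F * F) * R).trace = (F * X * F).trace := by
      rw [Matrix.trace_mul_cycle R (F * F) R, hRR, ← Matrix.mul_assoc,
        Matrix.trace_mul_cycle X F F]
    rw [heq, Matrix.trace_sub, Complex.sub_re, htr] at h0
    linarith
  have hTrXre : X.trace.re = 1 / (d : ℝ) ^ 2 := by
    rw [hTrX, show (1 / (d : ℂ) ^ 2) = (((1 / (d : ℝ) ^ 2 : ℝ)) : ℂ) by push_cast; ring]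
    exact Complex.ofReal_re _
  have htnb : traceNorm M ≤ 2 * (1 / (d : ℝ) ^ 2) := by
    rw [hTN]
    calc ∑ i, |hHh.eigenvalues i|
        ≤ ∑ i, ((star (⇑(hHh.eigenvectorBasis i)) ⬝ᵥ (X *ᵥ ⇑(hHh.eigenvectorBasis i))).re +
          (star (⇑(hHh.eigenvectorBasis i)) ⬝ᵥ
            ((F * X * F) *ᵥ ⇑(hHh.eigenvectorBasis i))).re) :=
          Finset.sum_le_sum fun i _ => hmain i
      _ = X.trace.re + (F * X * F).trace.re := by
          rw [Finset.sum_add_distrib, hsumX, hsumB]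
      _ ≤ 2 * (1 / (d : ℝ) ^ 2) := by
          rw [hTrXre] at hFXF ⊢
          linarith
  -- final numerics
  have hdpos : (0 : ℝ) < d := by positivity
  have hd2 : (2 : ℝ) ≤ (d : ℝ) := by exact_mod_cast hd
  have hdpos2 : (0 : ℝ) < (d : ℝ) := by linarith
  have hc : 0 < α / (α - 1) := by
    apply div_pos <;> linarith
  have hεle : (d : ℝ) ^ (-(2 * (α - 1))) ≤ 1 / 4 := by
    have h1d : (1 : ℝ) ≤ (d : ℝ) := by linarith
    calc (d : ℝ) ^ (-(2 * (α - 1))) ≤ (d : ℝ) ^ (-(2 : ℝ)) :=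
          Real.rpow_le_rpow_of_exponent_le h1d (by linarith)
      _ = ((d : ℝ) ^ (2 : ℕ))⁻¹ := by
          rw [Real.rpow_neg hdpos2.le, show ((2 : ℝ)) = ((2 : ℕ) : ℝ) by norm_num,
            Real.rpow_natCast]
      _ ≤ 1 / 4 := by
          rw [inv_eq_one_div]
          apply one_div_le_one_div_of_le (by norm_num)
          nlinarith
  have hgoal2 : (α / (α - 1)) * d * traceNorm M ≤
      (α / (α - 1)) * d * (2 * (1 / (d : ℝ) ^ 2)) :=
    mul_le_mul_of_nonneg_left htnb (mul_nonneg hc.le hdpos2.le)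
  calc (α / (α - 1)) * d * traceNorm M
      ≤ (α / (α - 1)) * d * (2 * (1 / (d : ℝ) ^ 2)) := hgoal2
    _ = 2 * (α / (α - 1)) * (1 / d) := by
        have hdne : (d : ℝ) ≠ 0 := ne_of_gt hdpos2
        have hα1 : α - 1 ≠ 0 := ne_of_gt (by linarith)
        field_simp
    _ ≤ 9 * (α / (α - 1)) * (1 / d) * (1 - (d : ℝ) ^ (-(2 * (α - 1)))) := by
        have h34 : (3 : ℝ) / 4 ≤ 1 - (d : ℝ) ^ (-(2 * (α - 1))) := by linarith
        have hpos : 0 < (α / (α - 1)) * (1 / (d : ℝ)) := by positivity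
        nlinarith
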